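/- Let G and H be two DAGs on vertex set [n] with the same skeleton having edge set E. Then there exists a sequence of DAGs G = G_0, G_1, ..., G_k = H with k ≤ |E| such that each G_{t+1} is obtained from G_t by reversing a single directed edge. -/

import Mathlib

def AcyclicF {V : Type*} (G : Finset (V × V)) : Prop :=
  ∀ v, ¬ Relation.TransGen (fun a b => (a, b) ∈ G) v v

namespace Stmt2Aux

open Relation Finset
open scoped Classical

variable {n : ℕ}

noncomputable def pot (G : Finset (Fin n × Fin n)) (x : Fin n) : ℕ :=
  (Finset.univ.filter (fun a => Relation.TransGen (fun a b => (a, b) ∈ G) a x)).card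

lemma pot_le (G : Finset (Fin n × Fin n)) (x : Fin n) : pot G x ≤ n := by
  unfold pot
  calc _ ≤ (Finset.univ : Finset (Fin n)).card := Finset.card_filter_le _ _
  _ = n := by simp

lemma pot_lt {G : Finset (Fin n × Fin n)} (hG : AcyclicF G) {a b : Fin n}
    (h : Relation.TransGen (fun a b => (a, b) ∈ G) a b) : pot G a < pot G b := by
  unfold pot
  apply Finset.card_lt_card
  constructor
  · intro c hc
    simp only [Finset.mem_filter, Finset.mem_univ, true_and] at hc ⊢
    exact hc.trans h
  · intro hsub
    have : a ∈ Finset.univ.filter (fun c => Relation.TransGen (fun a b => (a, b) ∈ G) c b) := by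
      simp only [Finset.mem_filter, Finset.mem_univ, true_and]; exact h
    have := hsub this
    simp only [Finset.mem_filter, Finset.mem_univ, true_and] at this
    exact hG a this

lemma two_cycle {G : Finset (Fin n × Fin n)} (hG : AcyclicF G) {a b : Fin n}
    (h1 : (a, b) ∈ G) (h2 : (b, a) ∈ G) : False :=
  hG a ((Relation.TransGen.single (show (fun a b => (a, b) ∈ G) a b from h1)).tail h2)

lemma skel_mem {G H : Finset (Fin n × Fin n)}
    (hskel : G.image (fun p => s(p.1, p.2)) = H.image (fun p => s(p.1, p.2)))
    {a b : Fin n} (h : (a, b) ∈ G) : (a, b) ∈ H ∨ (b, a) ∈ H := by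
  have : s(a, b) ∈ H.image (fun p => s(p.1, p.2)) := by
    rw [← hskel]
    exact Finset.mem_image.mpr ⟨(a, b), h, rfl⟩
  obtain ⟨q, hq, heq⟩ := Finset.mem_image.mp this
  rw [Sym2.eq_iff] at heq
  rcases heq with ⟨h1, h2⟩ | ⟨h1, h2⟩
  · left; rwa [← h1, ← h2, Prod.mk.eta]
  · right; rw [← h1, ← h2]; exact hq

/-- decomposing a TransGen path in `insert (w,v) (G.erase (v,w))` -/
lemma cycle_extract {G : Finset (Fin n × Fin n)} {v w : Fin n} {x y : Fin n}
    (h : Relation.TransGen (fun a b => (a, b) ∈ insert (w, v) (G.erase (v, w))) x y) :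
    Relation.TransGen (fun a b => (a, b) ∈ G.erase (v, w)) x y ∨
    (Relation.ReflTransGen (fun a b => (a, b) ∈ G.erase (v, w)) x w ∧
     Relation.ReflTransGen (fun a b => (a, b) ∈ G.erase (v, w)) v y) := by
  induction h with
  | single h =>
    rcases Finset.mem_insert.mp h with h | h
    · obtain ⟨h1, h2⟩ := Prod.mk.injEq _ _ _ _ ▸ h
      right
      exact ⟨h1 ▸ Relation.ReflTransGen.refl, h2 ▸ Relation.ReflTransGen.refl⟩
    · left; exact Relation.TransGen.single h
  | tail h1 h2 ih =>
    rename_i b c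
    rcases Finset.mem_insert.mp h2 with h2 | h2
    · obtain ⟨hb, hc⟩ := Prod.mk.injEq _ _ _ _ ▸ h2
      rcases ih with ih | ⟨p, q⟩
      · right; exact ⟨hb ▸ ih.to_reflTransGen, hc ▸ Relation.ReflTransGen.refl⟩
      · right; exact ⟨p, hc ▸ Relation.ReflTransGen.refl⟩
    · rcases ih with ih | ⟨p, q⟩
      · left; exact ih.tail h2
      · right; exact ⟨p, q.tail h2⟩

lemma acyclic_reverse {G : Finset (Fin n × Fin n)} {v w : Fin n} (hG : AcyclicF G)
    (hvw : (v, w) ∈ G)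
    (hpath : ¬ Relation.TransGen (fun a b => (a, b) ∈ G.erase (v, w)) v w) :
    AcyclicF (insert (w, v) (G.erase (v, w))) := by
  have hne : v ≠ w := by
    rintro rfl
    exact hG v (Relation.TransGen.single hvw)
  intro x hx
  rcases cycle_extract hx with h | ⟨p, q⟩
  · exact hG x (Relation.TransGen.mono (fun a b hab => Finset.mem_of_mem_erase hab) _ _ h)
  · have : Relation.ReflTransGen (fun a b => (a, b) ∈ G.erase (v, w)) v w := q.trans p
    rcases Relation.reflTransGen_iff_eq_or_transGen.mp this with h | h
    · exact hne h.symm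
    · exact hpath h

/-- along a path in G either all edges agree with H, or some edge disagrees -/
lemma path_cases {G H : Finset (Fin n × Fin n)} {v w : Fin n}
    (hGH : ∀ a b : Fin n, (a, b) ∈ G → (a, b) ∈ H ∨ (b, a) ∈ H) {z : Fin n} {x : Fin n}
    (h : Relation.TransGen (fun a b => (a, b) ∈ G.erase (v, w)) x z) :
    Relation.ReflTransGen (fun a b => (a, b) ∈ H) x z ∨
    ∃ a b : Fin n, (a, b) ∈ G ∧ (b, a) ∈ H ∧
      Relation.ReflTransGen (fun a b => (a, b) ∈ G) b z := by
  induction h using Relation.TransGen.head_induction_on with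
  | single h =>
    rename_i a
    have haG : (a, z) ∈ G := Finset.mem_of_mem_erase h
    rcases hGH a z haG with h' | h'
    · left; exact Relation.ReflTransGen.single h'
    · right; exact ⟨a, z, haG, h', Relation.ReflTransGen.refl⟩
  | head h1 h2 ih =>
    rename_i a b
    have haG : (a, b) ∈ G := Finset.mem_of_mem_erase h1
    rcases ih with ih | ⟨a', b', h3, h4, h5⟩
    · rcases hGH a b haG with h' | h'
      · left; exact Relation.ReflTransGen.head h' ih
      · right
        refine ⟨a, b, haG, h', ?_⟩
        exact (Relation.TransGen.mono (fun a b hab => Finset.mem_of_mem_erase hab) _ _ h2).to_reflTransGen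
    · right; exact ⟨a', b', h3, h4, h5⟩

/-- key lemma: existence of a reversible disagreeing edge -/
lemma exists_reversible {G H : Finset (Fin n × Fin n)} (hG : AcyclicF G) (hH : AcyclicF H)
    (hskel : G.image (fun p => s(p.1, p.2)) = H.image (fun p => s(p.1, p.2)))
    (hne : (G.filter (fun p => (p.2, p.1) ∈ H)).Nonempty) :
    ∃ v w : Fin n, (v, w) ∈ G ∧ (w, v) ∈ H ∧
      ¬ Relation.TransGen (fun a b => (a, b) ∈ G.erase (v, w)) v w := by
  classical
  set D := G.filter (fun p => (p.2, p.1) ∈ H) with hD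
  obtain ⟨p₀, hp₀, hmin⟩ := D.exists_min_image
    (fun p => pot G p.2 * (n + 1) + (n - pot G p.1)) hne
  obtain ⟨v, w⟩ := p₀
  simp only [hD, Finset.mem_filter] at hp₀
  refine ⟨v, w, hp₀.1, hp₀.2, ?_⟩
  -- consequences of minimality
  have C1 : ∀ a b : Fin n, (a, b) ∈ G → (b, a) ∈ H →
      ¬ Relation.TransGen (fun a b => (a, b) ∈ G) b w := by
    intro a b hab hba htg
    have hmem : (a, b) ∈ D := Finset.mem_filter.mpr ⟨hab, hba⟩
    have hk := hmin _ hmem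
    have hlt : pot G b < pot G w := pot_lt hG htg
    dsimp only at hk
    have : pot G b * (n + 1) + (n - pot G a) < pot G w * (n + 1) + (n - pot G v) := by
      calc pot G b * (n + 1) + (n - pot G a) ≤ pot G b * (n + 1) + n := by
            exact Nat.add_le_add_left (Nat.sub_le _ _) _
        _ < (pot G b + 1) * (n + 1) := by ring_nf; omega
        _ ≤ pot G w * (n + 1) := Nat.mul_le_mul_right _ hlt
        _ ≤ pot G w * (n + 1) + (n - pot G v) := Nat.le_add_right _ _
    omega
  have C2 : ∀ z : Fin n, (z, w) ∈ G → (w, z) ∈ H →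
      ¬ Relation.TransGen (fun a b => (a, b) ∈ G) v z := by
    intro z hz hwz htg
    have hmem : (z, w) ∈ D := Finset.mem_filter.mpr ⟨hz, hwz⟩
    have hk := hmin _ hmem
    dsimp only at hk
    have hlt : pot G v < pot G z := pot_lt hG htg
    have hzn : pot G z ≤ n := pot_le G z
    omega
  intro htg
  obtain ⟨z, hvz, hzw⟩ := Relation.TransGen.tail'_iff.mp htg
  have hzwG : (z, w) ∈ G := Finset.mem_of_mem_erase hzw
  have hzv : z ≠ v := by
    rintro rfl
    exact (Finset.mem_erase.mp hzw).1 rfl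
  have hvzT : Relation.TransGen (fun a b => (a, b) ∈ G.erase (v, w)) v z := by
    rcases Relation.reflTransGen_iff_eq_or_transGen.mp hvz with h | h
    · exact absurd h hzv
    · exact h
  have hvzG : Relation.TransGen (fun a b => (a, b) ∈ G) v z :=
    Relation.TransGen.mono (fun a b hab => Finset.mem_of_mem_erase hab) _ _ hvzT
  rcases skel_mem hskel hzwG with hzwH | hwzH
  · -- edge (z,w) agrees with H; analyze path v ⟶ z
    rcases path_cases (fun a b h => skel_mem hskel h) hvzT with hpa | ⟨a, b, h3, h4, h5⟩
    · -- cycle in H : v ⟶ z → w → v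
      exact hH v ((Relation.TransGen.tail' hpa hzwH).tail hp₀.2)
    · exact C1 a b h3 h4 (Relation.TransGen.tail' h5 hzwG)
  · exact C2 z hzwG hwzH hvzG

lemma skel_reverse {G : Finset (Fin n × Fin n)} {v w : Fin n} (hvw : (v, w) ∈ G) :
    (insert (w, v) (G.erase (v, w))).image (fun p => s(p.1, p.2)) =
      G.image (fun p => s(p.1, p.2)) := by
  classical
  apply Finset.Subset.antisymm
  · intro x hx
    obtain ⟨p, hp, rfl⟩ := Finset.mem_image.mp hx
    rcases Finset.mem_insert.mp hp with rfl | hp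
    · exact Finset.mem_image.mpr ⟨(v, w), hvw, Sym2.eq_swap⟩
    · exact Finset.mem_image.mpr ⟨p, Finset.mem_of_mem_erase hp, rfl⟩
  · intro x hx
    obtain ⟨p, hp, rfl⟩ := Finset.mem_image.mp hx
    by_cases hpe : p = (v, w)
    · subst hpe
      exact Finset.mem_image.mpr ⟨(w, v), Finset.mem_insert_self _ _, Sym2.eq_swap⟩
    · exact Finset.mem_image.mpr
        ⟨p, Finset.mem_insert_of_mem (Finset.mem_erase.mpr ⟨hpe, hp⟩), rfl⟩

lemma main_aux {n : ℕ} (H : Finset (Fin n × Fin n)) (hH : AcyclicF H) :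
    ∀ d : ℕ, ∀ G : Finset (Fin n × Fin n), AcyclicF G →
      (G.filter (fun p => (p.2, p.1) ∈ H)).card = d →
      G.image (fun p => s(p.1, p.2)) = H.image (fun p => s(p.1, p.2)) →
      ∃ (k : ℕ) (F : ℕ → Finset (Fin n × Fin n)),
        k ≤ d ∧ F 0 = G ∧ F k = H ∧
        (∀ t ≤ k, AcyclicF (F t)) ∧
        ∀ t < k, ∃ i j, (i, j) ∈ F t ∧ F (t + 1) = insert (j, i) ((F t).erase (i, j)) := by
  classical
  intro d
  induction d with
  | zero =>
    intro G hG hcard hskel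
    have hDem : G.filter (fun p => (p.2, p.1) ∈ H) = ∅ := Finset.card_eq_zero.mp hcard
    have hGH : G = H := by
      apply Finset.Subset.antisymm
      · rintro ⟨a, b⟩ hab
        rcases skel_mem hskel hab with h | h
        · exact h
        · exfalso
          have : (a, b) ∈ G.filter (fun p => (p.2, p.1) ∈ H) :=
            Finset.mem_filter.mpr ⟨hab, h⟩
          rw [hDem] at this; exact absurd this (Finset.notMem_empty _)
      · rintro ⟨a, b⟩ hab
        rcases skel_mem hskel.symm hab with h | h
        · exact h
        · exfalso
          have : (b, a) ∈ G.filter (fun p => (p.2, p.1) ∈ H) :=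
            Finset.mem_filter.mpr ⟨h, hab⟩
          rw [hDem] at this; exact absurd this (Finset.notMem_empty _)
    exact ⟨0, fun _ => G, Nat.le_refl 0, rfl, hGH, fun t ht => by
      simpa using hG, fun t ht => absurd ht (Nat.not_lt_zero t)⟩
  | succ d ih =>
    intro G hG hcard hskel
    have hne : (G.filter (fun p => (p.2, p.1) ∈ H)).Nonempty := by
      rw [← Finset.card_pos, hcard]; omega
    obtain ⟨v, w, hvwG, hwvH, hpath⟩ := exists_reversible hG hH hskel hne
    set G' := insert (w, v) (G.erase (v, w)) with hG'def
    have hG' : AcyclicF G' := acyclic_reverse hG hvwG hpath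
    have hskel' : G'.image (fun p => s(p.1, p.2)) = H.image (fun p => s(p.1, p.2)) := by
      rw [hG'def, skel_reverse hvwG, hskel]
    have hvwH : (v, w) ∉ H := fun h => two_cycle hH h hwvH
    have hDeq : G'.filter (fun p => (p.2, p.1) ∈ H) =
        (G.filter (fun p => (p.2, p.1) ∈ H)).erase (v, w) := by
      ext ⟨a, b⟩
      simp only [hG'def, Finset.mem_filter, Finset.mem_insert, Finset.mem_erase,
        Prod.mk.injEq]
      constructor
      · rintro ⟨h1 | ⟨h1, h2⟩, h3⟩
        · exfalso
          obtain ⟨rfl, rfl⟩ := Prod.mk.injEq _ _ _ _ ▸ h1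
          exact hvwH h3
        · exact ⟨h1, h2, h3⟩
      · rintro ⟨h1, h2, h3⟩
        exact ⟨Or.inr ⟨h1, h2⟩, h3⟩
    have hDcard : (G'.filter (fun p => (p.2, p.1) ∈ H)).card = d := by
      have hmemD : (v, w) ∈ G.filter (fun p => (p.2, p.1) ∈ H) := by
        simp only [Finset.mem_filter]; exact ⟨hvwG, hwvH⟩
      rw [hDeq, Finset.card_erase_of_mem hmemD, hcard]
      omega
    obtain ⟨k, F, hk, hF0, hFk, hFac, hFstep⟩ := ih G' hG' hDcard hskel'
    refine ⟨k + 1, fun t => if t = 0 then G else F (t - 1), by omega, by simp, ?_, ?_, ?_⟩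
    · simp only [Nat.succ_ne_zero, if_false, Nat.add_sub_cancel]; exact hFk
    · intro t ht
      rcases Nat.eq_zero_or_pos t with rfl | htpos
      · simpa using hG
      · have : t ≠ 0 := by omega
        simp only [this, if_false]
        exact hFac (t - 1) (by omega)
    · intro t ht
      rcases Nat.eq_zero_or_pos t with rfl | htpos
      · refine ⟨v, w, by simpa using hvwG, ?_⟩
        norm_num
        rw [hF0, hG'def]
      · have ht0 : t ≠ 0 := by omega
        have ht1 : t + 1 ≠ 0 := by omega
        obtain ⟨i, j, hij, hstep⟩ := hFstep (t - 1) (by omega)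
        refine ⟨i, j, ?_, ?_⟩
        · simpa only [ht0, if_false] using hij
        · simp only [ht0, ht1, if_false]
          have : t + 1 - 1 = (t - 1) + 1 := by omega
          rw [this, hstep]

end Stmt2Aux

theorem stmt2 {n : ℕ} (G H : Finset (Fin n × Fin n))
    (hG : AcyclicF G) (hH : AcyclicF H)
    (hskel : G.image (fun p => s(p.1, p.2)) = H.image (fun p => s(p.1, p.2))) :
    ∃ (k : ℕ) (F : ℕ → Finset (Fin n × Fin n)),
      k ≤ (G.image (fun p => s(p.1, p.2))).card ∧
      F 0 = G ∧ F k = H ∧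
      (∀ t ≤ k, AcyclicF (F t)) ∧
      ∀ t < k, ∃ i j, (i, j) ∈ F t ∧ F (t + 1) = insert (j, i) ((F t).erase (i, j)) := by
  classical
  set D := G.filter (fun p => (p.2, p.1) ∈ H) with hD
  obtain ⟨k, F, hk, h0, hk', hac, hstep⟩ :=
    Stmt2Aux.main_aux H hH D.card G hG rfl hskel
  have hDle : D.card ≤ (G.image (fun p => s(p.1, p.2))).card := by
    have hinj : Set.InjOn (fun p : Fin n × Fin n => s(p.1, p.2)) ↑D := by
      rintro ⟨a, b⟩ ha ⟨c, d⟩ hc heq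
      simp only [Finset.coe_filter, Set.mem_setOf_eq, hD, Finset.mem_filter] at ha hc
      simp only [Sym2.eq_iff] at heq
      rcases heq with ⟨rfl, rfl⟩ | ⟨rfl, rfl⟩
      · rfl
      · exact absurd (Stmt2Aux.two_cycle hG ha.1 hc.1) not_false
    calc D.card = (D.image (fun p => s(p.1, p.2))).card :=
          (Finset.card_image_of_injOn hinj).symm
      _ ≤ (G.image (fun p => s(p.1, p.2))).card :=
          Finset.card_le_card (Finset.image_subset_image (Finset.filter_subset _ _))
  exact ⟨k, F, le_trans hk hDle, h0, hk', hac, hstep⟩
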